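/- Let α be an exponent sequence and let θ : ℕ → ℂ satisfy θ ∈ Λ_1(α). Then the forward shift operator F is mean ergodic on Λ_1(α) with Cesàro means converging to 0: for every positive integer k, lim_{n→∞} ∑_{j=0}^∞ | (1/n) ∑_{m=1}^{n} θ̃_{j-m} | · e^{-α_j/k} = 0, where θ̃_i := θ_i for i ≥ 0 and θ̃_i := 0 for i < 0. -/
import Mathlib


/-- For `θ ∈ Λ_1(α)`, the Cesàro means of the forward shift operator
applied to `θ` converge to `0` in every seminorm of `Λ_1(α)`.  Here `θ̃_{j-m}` is
taken to be `0` when `m > j`. -/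
theorem forward_shift_cesaro_tendsto_zero
    (α : ℕ → ℝ) (θ : ℕ → ℂ)
    (hα_nonneg : ∀ n, 0 ≤ α n) (hα_mono : Monotone α)
    (hα_tendsto : Filter.Tendsto α Filter.atTop Filter.atTop)
    (hθ : ∀ k : ℕ, 0 < k → Summable fun n : ℕ => ‖θ n‖ * Real.exp (-α n / (k : ℝ))) :
    ∀ k : ℕ, 0 < k → Filter.Tendsto
      (fun n : ℕ => ∑' j : ℕ,
        ‖(n : ℂ)⁻¹ * ∑ m ∈ Finset.Icc 1 n, (if m ≤ j then θ (j - m) else 0)‖ *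
          Real.exp (-α j / (k : ℝ)))
      Filter.atTop (nhds 0) := by
  intro k hk
  have hk' : (0:ℝ) < k := by exact_mod_cast hk
  set K : ℕ := 2 * k with hKdef
  have hKpos : 0 < K := by omega
  have hK' : (0:ℝ) < K := by exact_mod_cast hKpos
  have hKk : (K:ℝ) = 2 * (k:ℝ) := by push_cast [hKdef]; ring
  have hSsum : Summable fun i : ℕ => ‖θ i‖ * Real.exp (-α i / (K:ℝ)) := hθ K hKpos
  set S : ℝ := ∑' i : ℕ, ‖θ i‖ * Real.exp (-α i / (K:ℝ)) with hSdef
  have hS0 : 0 ≤ S := tsum_nonneg fun i => by positivity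
  -- exponential splitting
  have hexp : ∀ m i : ℕ, Real.exp (-α (i + m) / (k:ℝ))
      ≤ Real.exp (-α m / (K:ℝ)) * Real.exp (-α i / (K:ℝ)) := by
    intro m i
    rw [← Real.exp_add]
    apply Real.exp_le_exp.mpr
    have h1 : α m ≤ α (i + m) := hα_mono (Nat.le_add_left m i)
    have h2 : α i ≤ α (i + m) := hα_mono (Nat.le_add_right i m)
    have hsplit : -α (i + m) / (k:ℝ) = -α (i + m) / (K:ℝ) + -α (i + m) / (K:ℝ) := by
      rw [hKk]; field_simp; ring
    rw [hsplit]
    gcongr <;> linarith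
  -- summability of shifted pieces
  have hsum_h : ∀ m : ℕ,
      Summable (fun j : ℕ => (if m ≤ j then ‖θ (j - m)‖ else 0) * Real.exp (-α j / (k:ℝ))) := by
    intro m
    rw [← summable_nat_add_iff m]
    have heq : (fun i : ℕ => (if m ≤ i + m then ‖θ (i + m - m)‖ else 0) * Real.exp (-α (i + m) / (k:ℝ)))
        = fun i : ℕ => ‖θ i‖ * Real.exp (-α (i + m) / (k:ℝ)) := by
      funext i; simp
    rw [heq]
    apply Summable.of_nonneg_of_le (fun i => by positivity) _ (hθ k hk)
    intro i
    have hle : Real.exp (-α (i + m) / (k:ℝ)) ≤ Real.exp (-α i / (k:ℝ)) := by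
      apply Real.exp_le_exp.mpr
      have := hα_mono (Nat.le_add_right i m)
      gcongr
    exact mul_le_mul_of_nonneg_left hle (norm_nonneg _)
  -- tsum bound for each shifted piece
  have htsum_h : ∀ m : ℕ,
      (∑' j : ℕ, (if m ≤ j then ‖θ (j - m)‖ else 0) * Real.exp (-α j / (k:ℝ)))
        ≤ Real.exp (-α m / (K:ℝ)) * S := by
    intro m
    have h1 := hsum_h m
    have h2 := (Summable.sum_add_tsum_nat_add m h1).symm
    have hz : (∑ i ∈ Finset.range m,
        (if m ≤ i then ‖θ (i - m)‖ else 0) * Real.exp (-α i / (k:ℝ))) = 0 := by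
      apply Finset.sum_eq_zero
      intro i hi
      rw [Finset.mem_range] at hi
      simp [Nat.not_le.mpr hi]
    rw [hz, zero_add] at h2
    rw [h2]
    have h3 : (fun i : ℕ => (if m ≤ i + m then ‖θ (i + m - m)‖ else 0) * Real.exp (-α (i + m) / (k:ℝ)))
        = fun i : ℕ => ‖θ i‖ * Real.exp (-α (i + m) / (k:ℝ)) := by
      funext i; simp
    rw [h3]
    have hsum1 : Summable (fun i : ℕ => ‖θ i‖ * Real.exp (-α (i + m) / (k:ℝ))) := by
      rw [← h3]
      exact (summable_nat_add_iff (f := fun j : ℕ =>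
        (if m ≤ j then ‖θ (j - m)‖ else 0) * Real.exp (-α j / (k:ℝ))) m).mpr h1
    calc (∑' i : ℕ, ‖θ i‖ * Real.exp (-α (i + m) / (k:ℝ)))
        ≤ ∑' i : ℕ, Real.exp (-α m / (K:ℝ)) * (‖θ i‖ * Real.exp (-α i / (K:ℝ))) := by
          apply Summable.tsum_le_tsum _ hsum1 (hSsum.mul_left _)
          intro i
          have := hexp m i
          calc ‖θ i‖ * Real.exp (-α (i + m) / (k:ℝ))
              ≤ ‖θ i‖ * (Real.exp (-α m / (K:ℝ)) * Real.exp (-α i / (K:ℝ))) :=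
                mul_le_mul_of_nonneg_left this (norm_nonneg _)
            _ = Real.exp (-α m / (K:ℝ)) * (‖θ i‖ * Real.exp (-α i / (K:ℝ))) := by ring
      _ = Real.exp (-α m / (K:ℝ)) * S := by rw [tsum_mul_left]
  -- main bound
  have key : ∀ n : ℕ,
      (∑' j : ℕ, ‖(n : ℂ)⁻¹ * ∑ m ∈ Finset.Icc 1 n, (if m ≤ j then θ (j - m) else 0)‖ *
          Real.exp (-α j / (k : ℝ)))
      ≤ (n:ℝ)⁻¹ * ∑ m ∈ Finset.Icc 1 n, Real.exp (-α m / (K:ℝ)) * S := by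
    intro n
    have hGsum : Summable (fun j : ℕ => ∑ m ∈ Finset.Icc 1 n,
        (if m ≤ j then ‖θ (j - m)‖ else 0) * Real.exp (-α j / (k:ℝ))) :=
      summable_sum (fun m _ => hsum_h m)
    have hG : Summable (fun j : ℕ => (n:ℝ)⁻¹ * ∑ m ∈ Finset.Icc 1 n,
        (if m ≤ j then ‖θ (j - m)‖ else 0) * Real.exp (-α j / (k:ℝ))) :=
      hGsum.mul_left _
    have hterm : ∀ j : ℕ,
        ‖(n : ℂ)⁻¹ * ∑ m ∈ Finset.Icc 1 n, (if m ≤ j then θ (j - m) else 0)‖ *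
          Real.exp (-α j / (k : ℝ))
        ≤ (n:ℝ)⁻¹ * ∑ m ∈ Finset.Icc 1 n,
            (if m ≤ j then ‖θ (j - m)‖ else 0) * Real.exp (-α j / (k:ℝ)) := by
      intro j
      rw [norm_mul, norm_inv, Complex.norm_natCast, ← Finset.sum_mul, mul_assoc]
      gcongr
      calc ‖∑ m ∈ Finset.Icc 1 n, (if m ≤ j then θ (j - m) else 0)‖
          ≤ ∑ m ∈ Finset.Icc 1 n, ‖(if m ≤ j then θ (j - m) else 0)‖ := norm_sum_le _ _
        _ = ∑ m ∈ Finset.Icc 1 n, (if m ≤ j then ‖θ (j - m)‖ else 0) := by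
            apply Finset.sum_congr rfl
            intro m _
            split <;> simp
    calc (∑' j : ℕ, ‖(n : ℂ)⁻¹ * ∑ m ∈ Finset.Icc 1 n, (if m ≤ j then θ (j - m) else 0)‖ *
          Real.exp (-α j / (k : ℝ)))
        ≤ ∑' j : ℕ, (n:ℝ)⁻¹ * ∑ m ∈ Finset.Icc 1 n,
            (if m ≤ j then ‖θ (j - m)‖ else 0) * Real.exp (-α j / (k:ℝ)) :=
          Summable.tsum_le_tsum hterm (Summable.of_nonneg_of_le (fun j => by positivity) hterm hG) hG
      _ = (n:ℝ)⁻¹ * ∑ m ∈ Finset.Icc 1 n,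
            ∑' j : ℕ, (if m ≤ j then ‖θ (j - m)‖ else 0) * Real.exp (-α j / (k:ℝ)) := by
          rw [tsum_mul_left, Summable.tsum_finsetSum (fun m _ => hsum_h m)]
      _ ≤ (n:ℝ)⁻¹ * ∑ m ∈ Finset.Icc 1 n, Real.exp (-α m / (K:ℝ)) * S := by
          gcongr with m hm
          exact htsum_h m
  -- the bounding sequence tends to 0
  have hb : Filter.Tendsto (fun n : ℕ => (n:ℝ)⁻¹ * ∑ m ∈ Finset.Icc 1 n,
      Real.exp (-α m / (K:ℝ)) * S) Filter.atTop (nhds 0) := by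
    have hc : Filter.Tendsto (fun i : ℕ => Real.exp (-α (1 + i) / (K:ℝ)) * S)
        Filter.atTop (nhds 0) := by
      have h1 : Filter.Tendsto (fun i : ℕ => (1 + i : ℕ)) Filter.atTop Filter.atTop := by
        apply Filter.tendsto_atTop_mono (fun i => Nat.le_add_left i 1) Filter.tendsto_id
      have h2 : Filter.Tendsto (fun i : ℕ => α (1 + i)) Filter.atTop Filter.atTop :=
        hα_tendsto.comp h1
      have h3 : Filter.Tendsto (fun i : ℕ => -α (1 + i) / (K:ℝ)) Filter.atTop Filter.atBot := by
        apply Filter.Tendsto.atBot_div_const hK'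
        exact Filter.tendsto_neg_atBot_iff.mpr h2
      have h4 : Filter.Tendsto (fun i : ℕ => Real.exp (-α (1 + i) / (K:ℝ)))
          Filter.atTop (nhds 0) := Real.tendsto_exp_atBot.comp h3
      simpa using h4.mul_const S
    have := hc.cesaro
    convert this using 2 with n
    rw [← Finset.Ico_add_one_right_eq_Icc, Finset.sum_Ico_eq_sum_range]
    simp
  -- conclude by squeezing
  apply squeeze_zero (fun n => tsum_nonneg (fun j => by positivity)) key hb
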